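/- Let f be strictly concave increasing. Fix m < n and suppose q is feasible for the constraints q_i ≥ Ē_i (all i) and ∑_{i=1}^j q_i ≤ ∑_{i=1}^j (Ē_i + α H_i) (all j), with q_n < q_m and q_m > Ē_m. Then there exists ε > 0 such that the modified vector q' with q'_m = q_m - ε, q'_n = q_n + ε, q'_i = q_i otherwise, is still feasible and satisfies ∑_i f(q'_i) > ∑_i f(q_i). Hence q is not optimal. -/

import Mathlib

open Finset

lemma concave_transfer {f : ℝ → ℝ} (hconc : StrictConcaveOn ℝ (Set.Ici 0) f)
    {a c ε : ℝ} (ha : 0 ≤ a) (hac : a < c) (hε : 0 < ε) (hεle : a + ε ≤ c - ε) :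
    f a + f c < f (a + ε) + f (c - ε) := by
  have hd : 0 < c - a := by linarith
  set s : ℝ := ε / (c - a) with hs
  have hs0 : 0 < s := div_pos hε hd
  have hs1 : s < 1 := by
    rw [hs, div_lt_one hd]; linarith
  have hmemA : a ∈ Set.Ici (0:ℝ) := ha
  have hmemC : c ∈ Set.Ici (0:ℝ) := le_of_lt (lt_of_le_of_lt ha hac)
  have hne : a ≠ c := ne_of_lt hac
  have hsc : s * (c - a) = ε := by rw [hs]; exact div_mul_cancel₀ ε (ne_of_gt hd)
  have e1 : (1 - s) * a + s * c = a + ε := by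
    clear_value s; linear_combination hsc
  have e2 : s * a + (1 - s) * c = c - ε := by
    clear_value s; linear_combination -hsc
  have h1 := hconc.2 hmemA hmemC hne (by linarith : (0:ℝ) < 1 - s) hs0 (by ring)
  have h2 := hconc.2 hmemA hmemC hne hs0 (by linarith : (0:ℝ) < 1 - s) (by ring)
  simp only [smul_eq_mul] at h1 h2
  rw [e1] at h1
  rw [e2] at h2
  nlinarith [h1, h2]

/-- Perturbation argument for Lemma 4: if `q n < q m` for `m < n` and
`q m > Ē m`, a small transfer of energy from slot `m` to slot `n` stays
feasible and strictly increases the objective, so `q` is not optimal. -/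
theorem stmt_5 (N : ℕ) (hN : 0 < N)
    (Ebar H : Fin N → ℝ)
    (hEbar : ∀ i, 0 ≤ Ebar i) (hH : ∀ i, 0 ≤ H i)
    (α : ℝ) (hα0 : 0 ≤ α) (hα1 : α ≤ 1)
    (f : ℝ → ℝ)
    (hconc : StrictConcaveOn ℝ (Set.Ici 0) f)
    (hmono : StrictMonoOn f (Set.Ici 0))
    (q : Fin N → ℝ)
    (hfeas : (∀ i, Ebar i ≤ q i) ∧
      (∀ j : Fin N, ∑ i ∈ Iic j, q i ≤ ∑ i ∈ Iic j, (Ebar i + α * H i)))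
    (m n : Fin N) (hmn : m < n) (hq : q n < q m) (hqm : Ebar m < q m) :
    ∃ ε > (0 : ℝ),
      (let q' : Fin N → ℝ := fun i => if i = m then q m - ε
          else if i = n then q n + ε else q i
       (∀ i, Ebar i ≤ q' i) ∧
        (∀ j : Fin N, ∑ i ∈ Iic j, q' i ≤
          ∑ i ∈ Iic j, (Ebar i + α * H i)) ∧
        ∑ i, f (q i) < ∑ i, f (q' i)) := by
  obtain ⟨hfe, hfs⟩ := hfeas
  have hmn' : m ≠ n := ne_of_lt hmn
  set ε := min (q m - Ebar m) ((q m - q n)/2) with hεdef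
  have hε : 0 < ε := lt_min (by linarith) (by linarith)
  have hε1 : ε ≤ q m - Ebar m := min_le_left _ _
  have hε2 : ε ≤ (q m - q n)/2 := min_le_right _ _
  refine ⟨ε, hε, ?_⟩
  dsimp only
  set q' : Fin N → ℝ := fun i => if i = m then q m - ε
      else if i = n then q n + ε else q i with hq'def
  have hq'm : q' m = q m - ε := by simp [hq'def]
  have hq'n : q' n = q n + ε := by simp [hq'def, hmn'.symm]
  have hq'other : ∀ i, i ≠ m → i ≠ n → q' i = q i := by
    intro i h1 h2; simp [hq'def, h1, h2]
  have hdelta : ∀ i, q' i - q i =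
      (if i = m then -ε else 0) + (if i = n then ε else 0) := by
    intro i
    by_cases h1 : i = m
    · subst h1; simp [hq'm, hmn']
    · by_cases h2 : i = n
      · subst h2; simp [hq'n, h1]
      · simp [hq'other i h1 h2, h1, h2]
  refine ⟨?_, ?_, ?_⟩
  · intro i
    by_cases h1 : i = m
    · rw [if_pos h1, h1]; linarith
    · by_cases h2 : i = n
      · rw [if_neg h1, if_pos h2, h2]; linarith [hfe n]
      · rw [if_neg h1, if_neg h2]; exact hfe i
  · intro j
    have hsum : ∑ i ∈ Iic j, q' i = ∑ i ∈ Iic j, q i +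
        ((if m ∈ Iic j then -ε else 0) + (if n ∈ Iic j then ε else 0)) := by
      have : ∑ i ∈ Iic j, (q' i - q i) =
          (if m ∈ Iic j then -ε else 0) + (if n ∈ Iic j then ε else 0) := by
        calc ∑ i ∈ Iic j, (q' i - q i)
            = ∑ i ∈ Iic j, ((if i = m then -ε else 0) + (if i = n then ε else 0)) :=
              Finset.sum_congr rfl (fun i _ => hdelta i)
          _ = (∑ i ∈ Iic j, if i = m then -ε else 0)
              + ∑ i ∈ Iic j, if i = n then ε else 0 := Finset.sum_add_distrib
          _ = _ := by rw [Finset.sum_ite_eq' (Iic j) m (fun _ => -ε),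
                Finset.sum_ite_eq' (Iic j) n (fun _ => ε)]
      rw [Finset.sum_sub_distrib] at this
      linarith [this]
    rw [hsum]
    by_cases hn : n ∈ Iic j
    · have hm : m ∈ Iic j := by
        rw [Finset.mem_Iic] at *; exact le_of_lt (lt_of_lt_of_le hmn hn)
      simp only [hm, hn, if_pos]
      have := hfs j; linarith
    · have := hfs j
      by_cases hm : m ∈ Iic j <;> simp only [hm, hn, if_pos, if_neg, not_false_iff] <;> linarith
  · have hab : q n + ε ≤ q m - ε := by linarith
    have hkey := concave_transfer hconc (le_trans (hEbar n) (hfe n)) hq hε hab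
    have hsum : ∑ i, f (q' i) = ∑ i, f (q i)
        + ((f (q n + ε) - f (q n)) + (f (q m - ε) - f (q m))) := by
      have hdiff : ∑ i, (f (q' i) - f (q i)) =
          (f (q' m) - f (q m)) + (f (q' n) - f (q n)) := by
        rw [← Finset.sum_subset (Finset.subset_univ {m, n})]
        · rw [Finset.sum_pair hmn']
        · intro x _ hx
          simp only [Finset.mem_insert, Finset.mem_singleton, not_or] at hx
          rw [hq'other x hx.1 hx.2]; ring
      rw [Finset.sum_sub_distrib] at hdiff
      rw [hq'm, hq'n] at hdiff
      linarith [hdiff]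
    rw [hsum]
    linarith
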